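/- For any tree plan Γ and any m ≤ n < ω, every embedding h : Γ(m) → Γ(n) of L_Γ-structures satisfies π_m(a) = π_n(h(a)) for all a ∈ Γ(m), and there exists an automorphism g of Γ(n) with g ∘ h = id_{Γ(m)}. -/

import Mathlib

/-- A tree plan: a finite set of nodes of `ω^{<ω}` together with a labeling,
`lab σ = true` meaning `λ(σ) = ∞` and `lab σ = false` meaning `λ(σ) = 1`. -/
structure TreePlan where
  nodes : Finset (List ℕ)
  lab : List ℕ → Bool

/-- The conditions making the data of a `TreePlan` an actual tree plan:
it contains the root, is closed under predecessor, and the root is not an infinity-node. -/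
def IsTreePlan (Γ : TreePlan) : Prop :=
  [] ∈ Γ.nodes ∧ (∀ σ ∈ Γ.nodes, σ.dropLast ∈ Γ.nodes) ∧ Γ.lab [] = false

/-- The projection `π` forgetting the second coordinates. -/
def piX {S : Type*} (a : List (ℕ × Option S)) : List ℕ := a.map Prod.fst

/-- The tree `Γ(X)`, for `X` a set in an ambient type `S`.  Entries are pairs `(i, t)`
where `t = none` codes `★` (at nodes with `λ = 1`) and `t = some x` with `x ∈ X`
at infinity-nodes. -/
def GammaSet (Γ : TreePlan) {S : Type*} (X : Set S) : Set (List (ℕ × Option S)) :=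
  {a | piX a ∈ Γ.nodes ∧ ∀ (k : ℕ) (hk : k < a.length),
    (Γ.lab ((piX a).take (k + 1)) = false → (a.get ⟨k, hk⟩).2 = none) ∧
    (Γ.lab ((piX a).take (k + 1)) = true → ∃ x ∈ X, (a.get ⟨k, hk⟩).2 = some x)}

/-- `Γ(ω)`, realized with `X = ℕ`. -/
def GammaOmega (Γ : TreePlan) : Set (List (ℕ × Option ℕ)) :=
  GammaSet Γ (Set.univ : Set ℕ)

/-- `Γ(n) = Γ([n])` with `[n] = {0, …, n-1} ⊆ ℕ`. -/
def GammaN (Γ : TreePlan) (n : ℕ) : Set (List (ℕ × Option ℕ)) :=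
  GammaSet Γ {k : ℕ | k < n}

/-- `↓B`, the downward closure of `B` in `Γ(X)` with respect to the
initial-segment order. -/
def downSet (Γ : TreePlan) {S : Type*} (X : Set S) (B : Set (List (ℕ × Option S))) :
    Set (List (ℕ × Option S)) :=
  {a ∈ GammaSet Γ X | ∃ b ∈ B, a <+: b}

/-- The approximations to the tree closure. -/
def tclAux (Γ : TreePlan) {S : Type*} (X : Set S) (B : Set (List (ℕ × Option S))) :
    ℕ → Set (List (ℕ × Option S))
  | 0 => insert [] (downSet Γ X B)
  | n + 1 => tclAux Γ X B n ∪
      {a ∈ GammaSet Γ X | Γ.lab (piX a) = false ∧ a.dropLast ∈ tclAux Γ X B n}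

/-- The tree closure `tcl(B)` of `B ⊆ Γ(X)`. -/
def tcl (Γ : TreePlan) {S : Type*} (X : Set S) (B : Set (List (ℕ × Option S))) :
    Set (List (ℕ × Option S)) :=
  ⋃ n, tclAux Γ X B n

/-- Longest common prefix of two lists: the meet in the tree of sequences. -/
def lcp {α : Type*} [DecidableEq α] : List α → List α → List α
  | a :: as, b :: bs => if a = b then a :: lcp as bs else []
  | _, _ => []

/-- Embedding of `L_Γ`-structures between subsets `A`, `B` of trees of sequences:
an injection preserving the order (initial segment), the root, the predecessor,
the meet, and the predicates `P_σ` (i.e. the projection `π`). -/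
structure IsGEmb (Γ : TreePlan) {S T : Type*} [DecidableEq S] [DecidableEq T]
    (A : Set (List (ℕ × Option S))) (B : Set (List (ℕ × Option T)))
    (h : List (ℕ × Option S) → List (ℕ × Option T)) : Prop where
  maps : ∀ a ∈ A, h a ∈ B
  inj : ∀ a ∈ A, ∀ b ∈ A, h a = h b → a = b
  map_root : h [] = []
  map_le : ∀ a ∈ A, ∀ b ∈ A, (a <+: b ↔ h a <+: h b)
  map_pred : ∀ a ∈ A, h a.dropLast = (h a).dropLast
  map_meet : ∀ a ∈ A, ∀ b ∈ A, h (lcp a b) = lcp (h a) (h b)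
  map_P : ∀ a ∈ A, piX (h a) = piX a

open Classical in
/-- `I(Γ, σ)`: the number of infinity-nodes `τ ∈ Γ` with `τ ≤ σ`. -/
noncomputable def Icount (Γ : TreePlan) (σ : List ℕ) : ℕ :=
  (Γ.nodes.filter fun τ => Γ.lab τ = true ∧ τ <+: σ).card

open Classical in
/-- The relative tree plan `Γ_σ = {τ : σ⌢τ ∈ Γ}` with induced labeling. -/
noncomputable def TreePlan.sub (Γ : TreePlan) (σ : List ℕ) : TreePlan where
  nodes := (Γ.nodes.filter fun τ => σ <+: τ).image (List.drop σ.length)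
  lab := fun τ => if τ = [] then false else Γ.lab (σ ++ τ)

open Classical in
/-- The successors of the root of `Γ`. -/
noncomputable def rootSuccs (Γ : TreePlan) : Finset ℕ :=
  (Γ.nodes.filter fun σ => σ.length = 1).image fun σ => σ.headI

/-- `deg(Γ) = max {I(Γ,σ) : σ ∈ Γ}`. -/
noncomputable def degPlan (Γ : TreePlan) : ℕ := Γ.nodes.sup fun σ => Icount Γ σ

open Classical in
/-- `A(Γ)`: the number of nodes of `Γ` of maximal degree. -/
noncomputable def Acoef (Γ : TreePlan) : ℕ :=
  (Γ.nodes.filter fun σ => Icount Γ σ = degPlan Γ).card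

-- basic piX lemmas
lemma piX_length {S : Type*} (a : List (ℕ × Option S)) : (piX a).length = a.length :=
  List.length_map _

lemma piX_take {S : Type*} (a : List (ℕ × Option S)) (k : ℕ) :
    piX (a.take k) = (piX a).take k := List.map_take

lemma piX_append {S : Type*} (a b : List (ℕ × Option S)) :
    piX (a ++ b) = piX a ++ piX b := List.map_append

lemma piX_getElem {S : Type*} (a : List (ℕ × Option S)) {k : ℕ} (hk : k < a.length) :
    (piX a)[k]'(by simpa [piX_length]) = a[k].1 := List.getElem_map _

-- membership characterization via getElem
lemma mem_gammaSet_iff {Γ : TreePlan} {S : Type*} {X : Set S} {a : List (ℕ × Option S)} :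
    a ∈ GammaSet Γ X ↔ piX a ∈ Γ.nodes ∧ ∀ (k : ℕ) (hk : k < a.length),
      (Γ.lab ((piX a).take (k + 1)) = false → a[k].2 = none) ∧
      (Γ.lab ((piX a).take (k + 1)) = true → ∃ x ∈ X, a[k].2 = some x) := by
  simp [GammaSet, List.get_eq_getElem]

lemma take_mem_nodes {Γ : TreePlan} (hΓ : IsTreePlan Γ) {σ : List ℕ}
    (hσ : σ ∈ Γ.nodes) (k : ℕ) : σ.take k ∈ Γ.nodes := by
  have key : ∀ j, σ.take (σ.length - j) ∈ Γ.nodes := by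
    intro j
    induction j with
    | zero => simpa using hσ
    | succ j ih =>
      have h2 := hΓ.2.1 _ ih
      have : (σ.take (σ.length - j)).dropLast = σ.take (σ.length - (j+1)) := by
        rw [List.dropLast_eq_take, List.take_take, List.length_take]
        congr 1
        omega
      rwa [this] at h2
  rcases le_or_gt σ.length k with hk | hk
  · simpa [List.take_of_length_le hk] using hσ
  · have := key (σ.length - k)
    rwa [Nat.sub_sub_self hk.le] at this

lemma gammaSet_take {Γ : TreePlan} (hΓ : IsTreePlan Γ) {S : Type*} {X : Set S}
    {a : List (ℕ × Option S)} (ha : a ∈ GammaSet Γ X) (k : ℕ) :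
    a.take k ∈ GammaSet Γ X := by
  rw [mem_gammaSet_iff] at ha ⊢
  refine ⟨by rw [piX_take]; exact take_mem_nodes hΓ ha.1 k, ?_⟩
  intro k' hk'
  have hk'' : k' < k ∧ k' < a.length := by simpa [List.length_take] using hk'
  have hk'a : k' < a.length := hk''.2
  have hkk : k' < k := hk''.1
  have h1 : (piX (a.take k)).take (k' + 1) = (piX a).take (k' + 1) := by
    rw [piX_take, List.take_take]
    congr 1; omega
  have h2 : (a.take k)[k'] = a[k'] := List.getElem_take
  rw [h1, h2]
  exact ha.2 k' hk'a

lemma gammaSet_snoc {Γ : TreePlan} {S : Type*} {X : Set S}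
    {a : List (ℕ × Option S)} (ha : a ∈ GammaSet Γ X) {i : ℕ} {t : Option S}
    (h1 : piX a ++ [i] ∈ Γ.nodes)
    (h2 : (Γ.lab (piX a ++ [i]) = false → t = none) ∧
      (Γ.lab (piX a ++ [i]) = true → ∃ x ∈ X, t = some x)) :
    a ++ [(i, t)] ∈ GammaSet Γ X := by
  rw [mem_gammaSet_iff] at ha ⊢
  have hpi : piX (a ++ [(i, t)]) = piX a ++ [i] := by simp [piX_append, piX]
  refine ⟨by rw [hpi]; exact h1, ?_⟩
  intro k hk
  simp only [List.length_append, List.length_singleton] at hk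
  rcases lt_or_ge k a.length with hka | hka
  · have hg : (a ++ [(i, t)])[k] = a[k] := List.getElem_append_left hka
    have ht : (piX (a ++ [(i, t)])).take (k + 1) = (piX a).take (k + 1) := by
      rw [hpi, List.take_append_of_le_length (by rw [piX_length]; omega)]
    rw [hg, ht]
    exact ha.2 k hka
  · have hk0 : k = a.length := by omega
    have hg : (a ++ [(i, t)])[k] = (i, t) := by
      rw [List.getElem_append_right (by omega)]
      simp [hk0]
    have ht : (piX (a ++ [(i, t)])).take (k + 1) = piX a ++ [i] := by
      rw [hpi, List.take_of_length_le (by simp [piX_length]; omega)]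
    rw [hg, ht]
    exact h2

lemma lcp_self {α : Type*} [DecidableEq α] (l : List α) : lcp l l = l := by
  induction l with
  | nil => rfl
  | cons a as ih => simp [lcp, ih]

lemma lcp_prefix_left {α : Type*} [DecidableEq α] (l₁ l₂ : List α) : lcp l₁ l₂ <+: l₁ := by
  induction l₁ generalizing l₂ with
  | nil => cases l₂ <;> simp [lcp]
  | cons a as ih =>
    cases l₂ with
    | nil => simp [lcp]
    | cons b bs =>
      by_cases hab : a = b
      · rcases ih bs with ⟨t, ht⟩
        exact ⟨t, by simp [lcp, hab, ht]⟩
      · simp [lcp, hab]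

lemma lcp_prefix_right {α : Type*} [DecidableEq α] (l₁ l₂ : List α) : lcp l₁ l₂ <+: l₂ := by
  induction l₁ generalizing l₂ with
  | nil => cases l₂ <;> simp [lcp]
  | cons a as ih =>
    cases l₂ with
    | nil => simp [lcp]
    | cons b bs =>
      by_cases hab : a = b
      · rcases ih bs with ⟨t, ht⟩
        exact ⟨t, by simp [lcp, hab, ht]⟩
      · simp [lcp, hab]

/-- Coordinatewise relabeling: transform each entry's second component by a
function depending on the preceding prefix and the first component. -/
def trMap (P : List (ℕ × Option ℕ) → ℕ → ℕ → ℕ) :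
    List (ℕ × Option ℕ) → List (ℕ × Option ℕ) → List (ℕ × Option ℕ)
  | _, [] => []
  | pre, c :: rest => (c.1, c.2.map (P pre c.1)) :: trMap P (pre ++ [c]) rest

lemma trMap_length (P : List (ℕ × Option ℕ) → ℕ → ℕ → ℕ)
    (pre b : List (ℕ × Option ℕ)) : (trMap P pre b).length = b.length := by
  induction b generalizing pre with
  | nil => rfl
  | cons c rest ih => simp [trMap, ih]

lemma piX_trMap (P : List (ℕ × Option ℕ) → ℕ → ℕ → ℕ)
    (pre b : List (ℕ × Option ℕ)) : piX (trMap P pre b) = piX b := by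
  induction b generalizing pre with
  | nil => rfl
  | cons c rest ih => simp [trMap, piX] at ih ⊢; exact ih _

lemma trMap_take (P : List (ℕ × Option ℕ) → ℕ → ℕ → ℕ)
    (pre b : List (ℕ × Option ℕ)) (k : ℕ) :
    (trMap P pre b).take k = trMap P pre (b.take k) := by
  induction b generalizing pre k with
  | nil => simp [trMap]
  | cons c rest ih =>
    cases k with
    | zero => simp [trMap]
    | succ k => simp [trMap, ih]

lemma trMap_getElem (P : List (ℕ × Option ℕ) → ℕ → ℕ → ℕ)
    (pre b : List (ℕ × Option ℕ)) {k : ℕ} (hk : k < b.length) :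
    (trMap P pre b)[k]'(by rw [trMap_length]; exact hk) =
      (b[k].1, b[k].2.map (P (pre ++ b.take k) b[k].1)) := by
  induction b generalizing pre k with
  | nil => simp at hk
  | cons c rest ih =>
    cases k with
    | zero => simp [trMap]
    | succ k =>
      have hk' : k < rest.length := by simpa using hk
      simp only [trMap, List.getElem_cons_succ, List.take_succ_cons]
      rw [ih _ hk']
      simp

section TrMapLemmas

variable {Γ : TreePlan} {n : ℕ} {P : List (ℕ × Option ℕ) → ℕ → ℕ → ℕ}

/-- If every slot function maps `[n]` into `[n]`, `trMap` preserves `Γ(n)`. -/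
lemma trMap_mem (hP : ∀ pre i, Set.MapsTo (P pre i) {x | x < n} {x | x < n})
    {b : List (ℕ × Option ℕ)} (hb : b ∈ GammaN Γ n) :
    trMap P [] b ∈ GammaN Γ n := by
  rw [GammaN, mem_gammaSet_iff] at hb ⊢
  rw [piX_trMap]
  refine ⟨hb.1, ?_⟩
  intro k hk
  have hkb : k < b.length := by rwa [trMap_length] at hk
  rw [trMap_getElem P [] b hkb]
  rcases hb.2 k hkb with ⟨hf, ht⟩
  constructor
  · intro hlab
    simp [hf hlab]
  · intro hlab
    rcases ht hlab with ⟨x, hx, hx2⟩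
    exact ⟨P ([] ++ b.take k) b[k].1 x, hP _ _ hx, by simp [hx2]⟩

/-- Heads of valid continuations are distinguished by `trMap` when the slot maps
are injective on `[n]`. -/
lemma trMap_head_inj (hP : ∀ pre i, Set.InjOn (P pre i) {x | x < n})
    {pre : List (ℕ × Option ℕ)} {c d : ℕ × Option ℕ} {as bs : List (ℕ × Option ℕ)}
    (ha : pre ++ c :: as ∈ GammaN Γ n) (hb : pre ++ d :: bs ∈ GammaN Γ n)
    (heq : (c.1, c.2.map (P pre c.1)) = (d.1, d.2.map (P pre d.1))) : c = d := by
  rw [GammaN, mem_gammaSet_iff] at ha hb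
  rw [Prod.mk.injEq] at heq
  obtain ⟨h1, h2⟩ := heq
  have hlen : pre.length < (pre ++ c :: as).length := by simp
  have hlen' : pre.length < (pre ++ d :: bs).length := by simp
  have hga : (pre ++ c :: as)[pre.length] = c := by
    rw [List.getElem_append_right (le_refl _)]; simp
  have hgb : (pre ++ d :: bs)[pre.length] = d := by
    rw [List.getElem_append_right (le_refl _)]; simp
  have hta : (piX (pre ++ c :: as)).take (pre.length + 1) = piX pre ++ [c.1] := by
    rw [piX_append]
    have : piX pre ++ piX (c :: as) = piX pre ++ (c.1 :: piX as) := by simp [piX]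
    rw [this]
    rw [show pre.length = (piX pre).length from (piX_length pre).symm]
    rw [List.take_append]
    simp
  have htb : (piX (pre ++ d :: bs)).take (pre.length + 1) = piX pre ++ [d.1] := by
    rw [piX_append]
    have : piX pre ++ piX (d :: bs) = piX pre ++ (d.1 :: piX bs) := by simp [piX]
    rw [this]
    rw [show pre.length = (piX pre).length from (piX_length pre).symm]
    rw [List.take_append]
    simp
  rcases ha.2 pre.length hlen with ⟨haf, hat⟩
  rcases hb.2 pre.length hlen' with ⟨hbf, hbt⟩
  rw [hga] at haf hat
  rw [hgb] at hbf hbt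
  rw [hta] at haf hat
  rw [htb] at hbf hbt
  rw [← h1] at hbf hbt
  cases hlab : Γ.lab (piX pre ++ [c.1]) with
  | false =>
    have := haf hlab; have := hbf hlab
    exact Prod.ext h1 (by simp_all)
  | true =>
    rcases hat hlab with ⟨x, hx, hx2⟩
    rcases hbt hlab with ⟨y, hy, hy2⟩
    rw [hx2, hy2, ← h1] at h2
    simp only [Option.map_some] at h2
    have : x = y := hP pre c.1 hx hy (by simpa using h2)
    exact Prod.ext h1 (by rw [hx2, hy2, this])

/-- `trMap` commutes with longest common prefixes. -/
lemma trMap_lcp (hP : ∀ pre i, Set.InjOn (P pre i) {x | x < n})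
    (pre : List (ℕ × Option ℕ)) (as bs : List (ℕ × Option ℕ))
    (ha : pre ++ as ∈ GammaN Γ n) (hb : pre ++ bs ∈ GammaN Γ n) :
    lcp (trMap P pre as) (trMap P pre bs) = trMap P pre (lcp as bs) := by
  induction as generalizing pre bs with
  | nil => cases bs <;> simp [trMap, lcp]
  | cons c as' ih =>
    cases bs with
    | nil => simp [trMap, lcp]
    | cons d bs' =>
      by_cases hcd : c = d
      · subst hcd
        simp only [trMap, lcp, if_pos rfl]
        rw [ih (pre ++ [c]) bs' (by simpa using ha) (by simpa using hb)]
        simp [trMap]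
      · have hne : (c.1, c.2.map (P pre c.1)) ≠ (d.1, d.2.map (P pre d.1)) := by
          intro hcontra
          exact hcd (trMap_head_inj hP ha hb hcontra)
        simp [trMap, lcp, hcd, hne]

end TrMapLemmas

lemma finite_lists {β : Type*} (F : Finset β) (N : ℕ) :
    {l : List β | l.length ≤ N ∧ ∀ x ∈ l, x ∈ F}.Finite := by
  induction N with
  | zero =>
    apply Set.Finite.subset (Set.finite_singleton ([] : List β))
    rintro l ⟨hl, -⟩
    simp [List.length_eq_zero_iff.mp (Nat.le_zero.mp hl)]
  | succ N ih =>
    apply Set.Finite.subset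
      (Set.Finite.insert [] (((F.finite_toSet.prod ih).image (fun p => p.1 :: p.2))))
    rintro l ⟨hl, hF⟩
    cases l with
    | nil => exact Set.mem_insert _ _
    | cons c rest =>
      refine Set.mem_insert_of_mem _ ⟨(c, rest), ⟨hF c (by simp), ?_, ?_⟩, rfl⟩
      · simpa using hl
      · intro x hx; exact hF x (by simp [hx])

lemma gammaN_finite (Γ : TreePlan) (n : ℕ) : (GammaN Γ n).Finite := by
  classical
  apply Set.Finite.subset (finite_lists
    ((Γ.nodes.biUnion fun σ => σ.toFinset) ×ˢ
      (insert none ((Finset.range n).image some)))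
    (Γ.nodes.sup List.length))
  intro a ha
  rw [GammaN, mem_gammaSet_iff] at ha
  constructor
  · have := Finset.le_sup (f := List.length) ha.1
    rw [piX_length] at this
    exact this
  · intro x hx
    rcases List.mem_iff_getElem.mp hx with ⟨k, hk, rfl⟩
    rw [Finset.mem_product]
    constructor
    · apply Finset.mem_biUnion.mpr ⟨piX a, ha.1, ?_⟩
      rw [List.mem_toFinset, ← piX_getElem a hk]
      exact List.getElem_mem _
    · rcases ha.2 k hk with ⟨hf, ht⟩
      cases hlab : Γ.lab ((piX a).take (k + 1)) with
      | false => simp [hf hlab]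
      | true =>
        rcases ht hlab with ⟨x, hxn, hx2⟩
        simp only [Finset.mem_insert, Finset.mem_image, Finset.mem_range]
        exact Or.inr ⟨x, hxn, hx2.symm⟩

/-- Extending (the inverse of) an injection `[m] ↪ [n]` to a self-injection of `[n]`. -/
lemma exists_inv {m n : ℕ} (hmn : m ≤ n) (f : ℕ → ℕ)
    (hinj : Set.InjOn f {x | x < m}) (hmap : Set.MapsTo f {x | x < m} {x | x < n}) :
    ∃ π : ℕ → ℕ, Set.InjOn π {x | x < n} ∧ Set.MapsTo π {x | x < n} {x | x < n} ∧
      ∀ x < m, π (f x) = x := by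
  classical
  set s : Finset ℕ := (Finset.range m).image f with hs
  have hscard : s.card = m := by
    rw [hs, Finset.card_image_of_injOn (by intro x hx y hy; exact hinj (by simpa using hx) (by simpa using hy)), Finset.card_range]
  have hssub : s ⊆ Finset.range n := by
    intro y hy
    rcases Finset.mem_image.mp hy with ⟨x, hx, rfl⟩
    exact Finset.mem_range.mpr (hmap (by simpa using hx))
  have hcards : (Finset.range n \ s).card = (Finset.range n \ Finset.range m).card := by
    rw [Finset.card_sdiff_of_subset hssub, Finset.card_sdiff_of_subset (by simpa using Finset.range_subset_range.mpr hmn)]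
    simp [hscard]
  set e := Finset.equivOfCardEq hcards with he
  refine ⟨fun y => if hy : ∃ x, x < m ∧ f x = y then hy.choose
    else if hy2 : y ∈ Finset.range n \ s then (e ⟨y, hy2⟩ : ℕ) else y, ?_, ?_, ?_⟩
  · -- InjOn on [n]
    intro y1 hy1 y2 hy2 heq
    simp only at heq
    have key : ∀ y, y < n → (((if hy : ∃ x, x < m ∧ f x = y then hy.choose
        else if hy2 : y ∈ Finset.range n \ s then (e ⟨y, hy2⟩ : ℕ) else y) < m) ↔
        ∃ x, x < m ∧ f x = y) := by
      intro y hyn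
      constructor
      · intro hlt
        by_contra hc
        rw [dif_neg hc] at hlt
        have hyin : y ∈ Finset.range n \ s := by
          simp only [Finset.mem_sdiff, Finset.mem_range]
          refine ⟨hyn, ?_⟩
          intro hys
          rcases Finset.mem_image.mp hys with ⟨x, hx, hfx⟩
          exact hc ⟨x, Finset.mem_range.mp hx, hfx⟩
        rw [dif_pos hyin] at hlt
        have := (e ⟨y, hyin⟩).2
        simp only [Finset.mem_sdiff, Finset.mem_range] at this
        rcases this with ⟨-, hnot⟩
        exact hnot hlt
      · intro hex
        rw [dif_pos hex]
        exact hex.choose_spec.1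
    by_cases h1 : ∃ x, x < m ∧ f x = y1
    · have h2 : ∃ x, x < m ∧ f x = y2 := by
        rw [← key y2 hy2, ← heq, dif_pos h1]
        exact h1.choose_spec.1
      rw [dif_pos h1, dif_pos h2] at heq
      have e1 := h1.choose_spec
      have e2 := h2.choose_spec
      rw [← e1.2, ← e2.2, heq]
    · have h2 : ¬ ∃ x, x < m ∧ f x = y2 := by
        intro h2
        have : (if hy : ∃ x, x < m ∧ f x = y2 then hy.choose
          else if hy2 : y2 ∈ Finset.range n \ s then (e ⟨y2, hy2⟩ : ℕ) else y2) < m := by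
          rw [dif_pos h2]; exact h2.choose_spec.1
        rw [← heq] at this
        exact h1 ((key y1 hy1).mp this)
      have hy1in : y1 ∈ Finset.range n \ s := by
        simp only [Finset.mem_sdiff, Finset.mem_range]
        refine ⟨hy1, fun hys => ?_⟩
        rcases Finset.mem_image.mp hys with ⟨x, hx, hfx⟩
        exact h1 ⟨x, Finset.mem_range.mp hx, hfx⟩
      have hy2in : y2 ∈ Finset.range n \ s := by
        simp only [Finset.mem_sdiff, Finset.mem_range]
        refine ⟨hy2, fun hys => ?_⟩
        rcases Finset.mem_image.mp hys with ⟨x, hx, hfx⟩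
        exact h2 ⟨x, Finset.mem_range.mp hx, hfx⟩
      rw [dif_neg h1, dif_neg h2, dif_pos hy1in, dif_pos hy2in] at heq
      have : e ⟨y1, hy1in⟩ = e ⟨y2, hy2in⟩ := Subtype.ext heq
      have h3 := e.injective this
      exact Subtype.ext_iff.mp h3
  · intro y hy
    simp only [Set.mem_setOf_eq] at hy ⊢
    by_cases h1 : ∃ x, x < m ∧ f x = y
    · rw [dif_pos h1]
      exact lt_of_lt_of_le h1.choose_spec.1 hmn
    · rw [dif_neg h1]
      have hyin : y ∈ Finset.range n \ s := by
        simp only [Finset.mem_sdiff, Finset.mem_range]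
        refine ⟨hy, fun hys => ?_⟩
        rcases Finset.mem_image.mp hys with ⟨x, hx, hfx⟩
        exact h1 ⟨x, Finset.mem_range.mp hx, hfx⟩
      rw [dif_pos hyin]
      have := (e ⟨y, hyin⟩).2
      simp only [Finset.mem_sdiff, Finset.mem_range] at this
      exact this.1
  · intro x hx
    have hex : ∃ x', x' < m ∧ f x' = f x := ⟨x, hx, rfl⟩
    simp only
    rw [dif_pos hex]
    exact hinj hex.choose_spec.1 hx hex.choose_spec.2

section Slot

variable (Γ : TreePlan) (m n : ℕ) (h : List (ℕ × Option ℕ) → List (ℕ × Option ℕ))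

open Classical in
noncomputable def preim (c : List (ℕ × Option ℕ)) : List (ℕ × Option ℕ) :=
  if hc : ∃ a ∈ GammaN Γ m, h a = c then hc.choose else []

noncomputable def fval (c : List (ℕ × Option ℕ)) (i : ℕ) (x : ℕ) : ℕ :=
  ((h (preim Γ m h c ++ [(i, some x)])).getLastD (0, none)).2.getD 0

def slotCond (c : List (ℕ × Option ℕ)) (i : ℕ) : Prop :=
  (∃ a ∈ GammaN Γ m, h a = c) ∧ (preim Γ m h c ++ [(i, some 0)] ∈ GammaN Γ m) ∧
  Set.InjOn (fval Γ m h c i) {x | x < m} ∧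
  Set.MapsTo (fval Γ m h c i) {x | x < m} {x | x < n}

open Classical in
noncomputable def slotPerm (hmn : m ≤ n) (c : List (ℕ × Option ℕ)) (i : ℕ) : ℕ → ℕ :=
  if hc : slotCond Γ m n h c i then
    (exists_inv hmn (fval Γ m h c i) hc.2.2.1 hc.2.2.2).choose
  else id

lemma slotPerm_injOn (hmn : m ≤ n) (c : List (ℕ × Option ℕ)) (i : ℕ) :
    Set.InjOn (slotPerm Γ m n h hmn c i) {x | x < n} := by
  by_cases hc : slotCond Γ m n h c i
  · rw [slotPerm, dif_pos hc]
    exact (exists_inv hmn (fval Γ m h c i) hc.2.2.1 hc.2.2.2).choose_spec.1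
  · rw [slotPerm, dif_neg hc]
    exact Function.injective_id.injOn

lemma slotPerm_mapsTo (hmn : m ≤ n) (c : List (ℕ × Option ℕ)) (i : ℕ) :
    Set.MapsTo (slotPerm Γ m n h hmn c i) {x | x < n} {x | x < n} := by
  by_cases hc : slotCond Γ m n h c i
  · rw [slotPerm, dif_pos hc]
    exact (exists_inv hmn (fval Γ m h c i) hc.2.2.1 hc.2.2.2).choose_spec.2.1
  · rw [slotPerm, dif_neg hc]
    exact fun x hx => hx

lemma slotPerm_inv (hmn : m ≤ n) (c : List (ℕ × Option ℕ)) (i : ℕ)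
    (hc : slotCond Γ m n h c i) :
    ∀ x < m, slotPerm Γ m n h hmn c i (fval Γ m h c i x) = x := by
  rw [slotPerm, dif_pos hc]
  exact (exists_inv hmn (fval Γ m h c i) hc.2.2.1 hc.2.2.2).choose_spec.2.2

end Slot

section HLemmas

variable {Γ : TreePlan} {m n : ℕ} {h : List (ℕ × Option ℕ) → List (ℕ × Option ℕ)}

lemma h_length (hemb : IsGEmb Γ (GammaN Γ m) (GammaN Γ n) h)
    {a : List (ℕ × Option ℕ)} (ha : a ∈ GammaN Γ m) : (h a).length = a.length := by
  rw [← piX_length, hemb.map_P a ha, piX_length]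

lemma h_take (hΓ : IsTreePlan Γ) (hemb : IsGEmb Γ (GammaN Γ m) (GammaN Γ n) h)
    {a : List (ℕ × Option ℕ)} (ha : a ∈ GammaN Γ m) (k : ℕ) (hk : k ≤ a.length) :
    h (a.take k) = (h a).take k := by
  have htm : a.take k ∈ GammaN Γ m := gammaSet_take hΓ ha k
  have hpre : h (a.take k) <+: h a := (hemb.map_le _ htm _ ha).mp (List.take_prefix k a)
  have hlen : (h (a.take k)).length = k := by
    rw [h_length hemb htm, List.length_take]; omega
  rw [List.prefix_iff_eq_take.mp hpre, hlen]

end HLemmas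

/-- For a tree plan `Γ` and `m ≤ n`, every embedding `h : Γ(m) → Γ(n)` of
`L_Γ`-structures preserves the projection (`π_m(a) = π_n(h(a))`), and there is an
automorphism `g` of `Γ(n)` with `g ∘ h = id` on `Γ(m)`. -/
theorem rearrange (Γ : TreePlan) (hΓ : IsTreePlan Γ) (m n : ℕ) (hmn : m ≤ n)
    (h : List (ℕ × Option ℕ) → List (ℕ × Option ℕ))
    (hemb : IsGEmb Γ (GammaN Γ m) (GammaN Γ n) h) :
    (∀ a ∈ GammaN Γ m, piX (h a) = piX a) ∧
    ∃ g : List (ℕ × Option ℕ) → List (ℕ × Option ℕ),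
      IsGEmb Γ (GammaN Γ n) (GammaN Γ n) g ∧
      (∀ b ∈ GammaN Γ n, ∃ a ∈ GammaN Γ n, g a = b) ∧
      (∀ a ∈ GammaN Γ m, g (h a) = a) := by
  refine ⟨hemb.map_P, ?_⟩
  set P := slotPerm Γ m n h hmn with hPdef
  have hPinj : ∀ pre i, Set.InjOn (P pre i) {x | x < n} := slotPerm_injOn Γ m n h hmn
  have hPmaps : ∀ pre i, Set.MapsTo (P pre i) {x | x < n} {x | x < n} :=
    slotPerm_mapsTo Γ m n h hmn
  set g := trMap P [] with hgdef
  have hglen : ∀ b, (g b).length = b.length := fun b => trMap_length P [] b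
  have hgmaps : ∀ b ∈ GammaN Γ n, g b ∈ GammaN Γ n := fun b hb => trMap_mem hPmaps hb
  have hginj : ∀ a ∈ GammaN Γ n, ∀ b ∈ GammaN Γ n, g a = g b → a = b := by
    intro a ha b hb heq
    have h1 : lcp (g a) (g b) = g (lcp a b) :=
      trMap_lcp hPinj [] a b (by simpa using ha) (by simpa using hb)
    rw [heq, lcp_self] at h1
    have hlena : a.length = b.length := by rw [← hglen a, heq, hglen]
    have hlen : (lcp a b).length = b.length := by rw [← hglen, ← h1, hglen]
    have e1 : lcp a b = a := (lcp_prefix_left a b).eq_of_length (by omega)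
    have e2 : lcp a b = b := (lcp_prefix_right a b).eq_of_length hlen
    rw [← e1, e2]
  have hgle : ∀ a ∈ GammaN Γ n, ∀ b ∈ GammaN Γ n, (a <+: b ↔ g a <+: g b) := by
    intro a ha b hb
    constructor
    · intro hab
      have h1 : a = b.take a.length := List.prefix_iff_eq_take.mp hab
      have h2 : g a = (g b).take a.length := by
        rw [hgdef, trMap_take]
        exact congrArg _ h1
      rw [h2]
      exact List.take_prefix _ _
    · intro hab
      have h1 : g a = (g b).take a.length := by
        have := List.prefix_iff_eq_take.mp hab
        rwa [hglen] at this
      rw [hgdef, trMap_take] at h1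
      have h2 : a = b.take a.length :=
        hginj a ha _ (gammaSet_take hΓ hb a.length) h1
      rw [List.prefix_iff_eq_take]
      exact h2
  have hgpred : ∀ a ∈ GammaN Γ n, g a.dropLast = (g a).dropLast := by
    intro a _
    rw [List.dropLast_eq_take, List.dropLast_eq_take, hglen, hgdef, trMap_take]
  have hgmeet : ∀ a ∈ GammaN Γ n, ∀ b ∈ GammaN Γ n, g (lcp a b) = lcp (g a) (g b) := by
    intro a ha b hb
    exact (trMap_lcp hPinj [] a b (by simpa using ha) (by simpa using hb)).symm
  have hgemb : IsGEmb Γ (GammaN Γ n) (GammaN Γ n) g :=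
    ⟨hgmaps, hginj, rfl, hgle, hgpred, hgmeet, fun a _ => piX_trMap P [] a⟩
  have hsurj : ∀ b ∈ GammaN Γ n, ∃ a ∈ GammaN Γ n, g a = b := by
    have hbij : Set.BijOn g (GammaN Γ n) (GammaN Γ n) := by
      rw [← Set.Finite.injOn_iff_bijOn_of_mapsTo (gammaN_finite Γ n) hgmaps]
      exact fun x hx y hy => hginj x hx y hy
    intro b hb
    rcases hbij.2.2 hb with ⟨a, ha, hab⟩
    exact ⟨a, ha, hab⟩
  refine ⟨g, hgemb, hsurj, ?_⟩
  -- the composition g ∘ h = id on Γ(m)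
  have hfst : ∀ b ∈ GammaN Γ m, ∀ j, ∀ (hj : j < b.length) (hjh : j < (h b).length),
      ((h b)[j]'hjh).1 = b[j].1 := by
    intro b hb j hj hjh
    have e1 := piX_getElem (h b) hjh
    have e2 := piX_getElem b hj
    rw [← e1, ← e2]
    simp only [hemb.map_P b hb]
  intro a ha
  have hha : h a ∈ GammaN Γ n := hemb.maps a ha
  have hlen1 : (h a).length = a.length := h_length hemb ha
  apply List.ext_getElem (by rw [hglen, hlen1])
  intro k hk1 hk2
  have hkh : k < (h a).length := by rw [hlen1]; exact hk2
  have hk1' : k < (trMap P [] (h a)).length := by rw [trMap_length]; exact hkh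
  have hgoal : (g (h a))[k]'hk1 = (trMap P [] (h a))[k]'hk1' := rfl
  rw [hgoal, trMap_getElem P [] (h a) hkh]
  have hfstk : (h a)[k].1 = a[k].1 := hfst a ha k hk2 hkh
  rcases (mem_gammaSet_iff.mp ha).2 k hk2 with ⟨haf, hat⟩
  rcases (mem_gammaSet_iff.mp hha).2 k hkh with ⟨hhf, hht⟩
  rw [hemb.map_P a ha] at hhf hht
  cases hlab : Γ.lab ((piX a).take (k + 1)) with
  | false =>
    rw [Prod.ext_iff]
    constructor
    · simpa using hfstk
    · simp [hhf hlab, haf hlab]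
  | true =>
    rcases hat hlab with ⟨x, hxm, hax⟩
    rcases hht hlab with ⟨y, hyn, hhy⟩
    simp only [Set.mem_setOf_eq] at hxm hyn
    have hm0 : 0 < m := Nat.pos_of_ne_zero (by omega)
    have hc : (h a).take k = h (a.take k) := (h_take hΓ hemb ha k hk2.le).symm
    have hex : ∃ a' ∈ GammaN Γ m, h a' = h (a.take k) :=
      ⟨a.take k, gammaSet_take hΓ ha k, rfl⟩
    have hpreim : preim Γ m h (h (a.take k)) = a.take k := by
      rw [preim, dif_pos hex]
      exact hemb.inj _ hex.choose_spec.1 _ (gammaSet_take hΓ ha k) hex.choose_spec.2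
    have hnodes : piX (a.take k) ++ [a[k].1] = (piX a).take (k + 1) := by
      rw [piX_take, ← List.take_concat_get (l := piX a) (i := k) (by rw [piX_length]; exact hk2)]
      rw [List.concat_eq_append]
      congr 1
      rw [piX_getElem a hk2]
    have hsnoc : ∀ x' < m, a.take k ++ [(a[k].1, some x')] ∈ GammaN Γ m := by
      intro x' hx'
      refine gammaSet_snoc (gammaSet_take hΓ ha k) ?_ ?_
      · rw [hnodes]
        exact take_mem_nodes hΓ (mem_gammaSet_iff.mp ha).1 (k + 1)
      · rw [hnodes, hlab]
        exact ⟨fun hcon => by simp at hcon, fun _ => ⟨x', hx', rfl⟩⟩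
    have hfval : ∀ x' < m, ∃ y' < n,
        h (a.take k ++ [(a[k].1, some x')]) = h (a.take k) ++ [(a[k].1, some y')] ∧
        fval Γ m h (h (a.take k)) a[k].1 x' = y' := by
      intro x' hx'
      have hb' : a.take k ++ [(a[k].1, some x')] ∈ GammaN Γ m := hsnoc x' hx'
      set b' := a.take k ++ [(a[k].1, some x')] with hb'def
      have hlb' : b'.length = k + 1 := by
        rw [hb'def, List.length_append, List.length_take]
        simp; omega
      have hlhb' : (h b').length = k + 1 := by rw [h_length hemb hb', hlb']
      have hkb' : k < (h b').length := by omega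
      have htk : b'.take k = a.take k := by
        rw [hb'def, List.take_append_of_le_length (by rw [List.length_take]; omega)]
        rw [List.take_take]
        congr 1; omega
      have hhtk : (h b').take k = h (a.take k) := by
        rw [← h_take hΓ hemb hb' k (by omega), htk]
      have hsplit : h b' = h (a.take k) ++ [(h b')[k]'hkb'] := by
        rw [← hhtk, ← List.concat_eq_append, List.take_concat_get]
        exact (List.take_of_length_le (by omega)).symm
      have hkb'2 : k < b'.length := by omega
      have hfst' : ((h b')[k]'hkb').1 = a[k].1 := by
        rw [hfst b' hb' k hkb'2 hkb']
        simp only [hb'def]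
        rw [List.getElem_append_right (by rw [List.length_take]; omega)]
        simp [List.length_take]
      rcases (mem_gammaSet_iff.mp (hemb.maps b' hb')).2 k hkb' with ⟨-, hbt⟩
      have hlabb' : (piX (h b')).take (k + 1) = (piX a).take (k + 1) := by
        rw [hemb.map_P b' hb']
        have e8 : piX [(a[k].1, some x')] = [a[k].1] := by simp [piX]
        have e9 : piX b' = (piX a).take (k + 1) := by
          rw [hb'def, piX_append, e8, hnodes]
        rw [e9, List.take_take]
        simp
      rw [hlabb', hlab] at hbt
      rcases hbt rfl with ⟨y', hy', hy'2⟩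
      refine ⟨y', hy', ?_, ?_⟩
      · rw [hsplit]
        congr 1
        rw [show ((h b')[k]'hkb') = (((h b')[k]'hkb').1, ((h b')[k]'hkb').2) from rfl, hfst', hy'2]
      · rw [fval, hpreim, ← hb'def, hsplit]
        simp [hy'2]
    have hcond : slotCond Γ m n h (h (a.take k)) a[k].1 := by
      refine ⟨hex, ?_, ?_, ?_⟩
      · rw [hpreim]
        exact hsnoc 0 hm0
      · intro x1 hx1 x2 hx2 hfeq
        simp only [Set.mem_setOf_eq] at hx1 hx2
        rcases hfval x1 hx1 with ⟨y1, -, he1, hv1⟩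
        rcases hfval x2 hx2 with ⟨y2, -, he2, hv2⟩
        have : y1 = y2 := by rw [← hv1, ← hv2, hfeq]
        subst this
        have heq2 : h (a.take k ++ [(a[k].1, some x1)]) = h (a.take k ++ [(a[k].1, some x2)]) := by
          rw [he1, he2]
        have := hemb.inj _ (hsnoc x1 hx1) _ (hsnoc x2 hx2) heq2
        have := List.append_cancel_left this
        simpa using this
      · intro x' hx'
        simp only [Set.mem_setOf_eq] at hx' ⊢
        rcases hfval x' hx' with ⟨y', hy', -, hv⟩
        rw [hv]; exact hy'
    have hfvx : fval Γ m h (h (a.take k)) a[k].1 x = y := by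
      rcases hfval x hxm with ⟨y', hy', he', hv⟩
      have e1 : a.take k ++ [(a[k].1, some x)] = a.take (k + 1) := by
        rw [← List.take_concat_get hk2, List.concat_eq_append]
        congr 2
        rw [show a[k] = (a[k].1, a[k].2) from rfl, hax]
      have e2 : h (a.take (k + 1)) = (h a).take k ++ [(a[k].1, some y)] := by
        rw [h_take hΓ hemb ha (k + 1) hk2]
        rw [← List.take_concat_get hkh, List.concat_eq_append]
        congr 2
        rw [show (h a)[k] = ((h a)[k].1, (h a)[k].2) from rfl, hfstk, hhy]
      rw [e1, e2, hc] at he'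
      have := List.append_cancel_left he'
      simp only [List.cons.injEq, Prod.mk.injEq, Option.some.injEq, and_true] at this
      rw [hv, ← this.2]
    rw [Prod.ext_iff]
    refine ⟨by simpa using hfstk, ?_⟩
    show ((h a)[k].2.map (P ([] ++ (h a).take k) (h a)[k].1)) = a[k].2
    rw [hhy, hax, List.nil_append, hc, hfstk]
    simp only [Option.map_some, Option.some.injEq]
    rw [← hfvx, hPdef]
    exact slotPerm_inv Γ m n h hmn _ _ hcond x hxm
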